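/- Let X be a Tychonoff space, P pseudocompactness, and λ_P X = ⋃ { int_{βX} cl_{βX} C : C cozero in X with cl_X C pseudocompact }. Then λ_P X = int_{βX} υX. -/

import Mathlib

open Set

def IsPseudocompactSpace (Y : Type) [TopologicalSpace Y] : Prop :=
  ∀ f : Y → ℝ, Continuous f → ∃ M : ℝ, ∀ y : Y, |f y| ≤ M

def IsCoz {X : Type} [TopologicalSpace X] (C : Set X) : Prop :=
  ∃ f : X → ℝ, Continuous f ∧ C = {x | f x ≠ 0}

def hewitt (X : Type) [TopologicalSpace X] : Set (StoneCech X) :=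
  ⋂₀ {C : Set (StoneCech X) |
      (∃ f : StoneCech X → ℝ, Continuous f ∧ C = {x | f x ≠ 0}) ∧
        Set.range (stoneCechUnit : X → StoneCech X) ⊆ C}

lemma closure_image_subset_hewitt {X : Type} [TopologicalSpace X] {C : Set X}
    (hC : IsPseudocompactSpace ↥(closure C)) :
    closure (stoneCechUnit '' C) ⊆ hewitt X := by
  intro q hq
  rw [hewitt, mem_sInter]
  rintro Z ⟨⟨g, hgc, rfl⟩, hrange⟩
  rcases C.eq_empty_or_nonempty with rfl | ⟨c, hc⟩
  · simp at hq
  · have hgne : ∀ y : ↥(closure C), g (stoneCechUnit (y : X)) ≠ 0 := fun y =>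
      hrange ⟨(y : X), rfl⟩
    set h' : ↥(closure C) → ℝ := fun y => (|g (stoneCechUnit (y : X))|)⁻¹ with hh'
    have hcont : Continuous h' := by
      apply Continuous.inv₀
      · exact (hgc.comp (continuous_stoneCechUnit.comp continuous_subtype_val)).abs
      · intro y
        exact abs_ne_zero.mpr (hgne y)
    obtain ⟨M, hM⟩ := hC h' hcont
    have hsub : stoneCechUnit '' C ⊆ {z | 1 ≤ M * |g z|} := by
      rintro _ ⟨x, hx, rfl⟩
      have hxA : x ∈ closure C := subset_closure hx
      have h1 : (|g (stoneCechUnit x)|)⁻¹ ≤ M := by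
        have h := hM ⟨x, hxA⟩
        rwa [hh', abs_of_nonneg (inv_nonneg.mpr (abs_nonneg _))] at h
      have ha : 0 < |g (stoneCechUnit x)| := abs_pos.mpr (hgne ⟨x, hxA⟩)
      have h2 := mul_le_mul_of_nonneg_right h1 (abs_nonneg (g (stoneCechUnit x)))
      rw [inv_mul_cancel₀ (ne_of_gt ha)] at h2
      exact h2
    have hclosed : IsClosed {z : StoneCech X | 1 ≤ M * |g z|} :=
      isClosed_le continuous_const (continuous_const.mul hgc.abs)
    have := closure_minimal hsub hclosed hq
    intro h0
    rw [mem_setOf_eq, h0] at this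
    exact absurd this (by norm_num)

lemma pseudo_of_closure_subset_hewitt {X : Type} [TopologicalSpace X] [T35Space X]
    {C : Set X} (hCopen : IsOpen C)
    (hK : closure (stoneCechUnit '' C) ⊆ hewitt X) :
    ∀ h : ↥(closure C) → ℝ, Continuous h → ∃ M : ℝ, ∀ y : ↥(closure C), |h y| ≤ M := by
  intro h hhc
  by_contra hnp
  push_neg at hnp
  have hun := hnp
  -- construct open sets `O n` with `Subtype.val ⁻¹' O n = {y | n < |h y|}` and points
  have key : ∀ n : ℕ, ∃ O : Set X, IsOpen O ∧
      (Subtype.val ⁻¹' O : Set ↥(closure C)) = {y | (n : ℝ) < |h y|} ∧ ∃ x, x ∈ O ∩ C := by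
    intro n
    have hUopen : IsOpen {y : ↥(closure C) | (n : ℝ) < |h y|} :=
      isOpen_lt continuous_const hhc.abs
    obtain ⟨O, hOo, hOe⟩ := isOpen_induced_iff.mp hUopen
    obtain ⟨y0, hy0⟩ := hun n
    have hy0O : (y0 : X) ∈ O := by rw [← mem_preimage, hOe]; exact hy0
    obtain ⟨x, hxO, hxC⟩ := mem_closure_iff.mp y0.2 O hOo hy0O
    exact ⟨O, hOo, hOe, x, hxO, hxC⟩
  choose O hOo hOe y hy using key
  set V : ℕ → Set X := fun n => O n ∩ C with hV
  have hyV : ∀ n, y n ∈ V n := hy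
  have hVC : ∀ n, V n ⊆ C := fun n => inter_subset_right
  have hmemh : ∀ (n : ℕ) (x : X) (hx : x ∈ V n) (hxA : x ∈ closure C),
      (n : ℝ) < |h ⟨x, hxA⟩| := by
    intro n x hx hxA
    have : (⟨x, hxA⟩ : ↥(closure C)) ∈ (Subtype.val ⁻¹' O n : Set ↥(closure C)) := hx.1
    rw [hOe] at this
    exact this
  -- local finiteness
  have hLF : LocallyFinite V := by
    intro x
    by_cases hx : x ∈ closure C
    · obtain ⟨N, hN⟩ := exists_nat_gt |h ⟨x, hx⟩|
      have hTopen : IsOpen {y : ↥(closure C) | |h y| < (N : ℝ)} :=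
        isOpen_lt hhc.abs continuous_const
      obtain ⟨O', hO'o, hO'e⟩ := isOpen_induced_iff.mp hTopen
      have hxO' : x ∈ O' := by
        have : (⟨x, hx⟩ : ↥(closure C)) ∈ (Subtype.val ⁻¹' O' : Set ↥(closure C)) := by
          rw [hO'e]; exact hN
        exact this
      refine ⟨O', hO'o.mem_nhds hxO', (Set.finite_Iio N).subset ?_⟩
      rintro n ⟨z, hzV, hzO'⟩
      have hzA : z ∈ closure C := subset_closure (hVC n hzV)
      have h1 : (n : ℝ) < |h ⟨z, hzA⟩| := hmemh n z hzV hzA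
      have h2 : |h ⟨z, hzA⟩| < (N : ℝ) := by
        have : (⟨z, hzA⟩ : ↥(closure C)) ∈ (Subtype.val ⁻¹' O' : Set ↥(closure C)) := hzO'
        rw [hO'e] at this; exact this
      have hlt : (n : ℝ) < N := h1.trans h2
      exact_mod_cast hlt
    · refine ⟨(closure C)ᶜ, isClosed_closure.isOpen_compl.mem_nhds hx, ?_⟩
      convert Set.finite_empty
      rw [eq_empty_iff_forall_notMem]
      rintro n ⟨z, hzV, hzc⟩
      exact hzc (subset_closure (hVC n hzV))
  -- bump functions
  have keyφ : ∀ n : ℕ, ∃ φ : X → ℝ, Continuous φ ∧ φ (y n) = 1 ∧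
      (∀ x, x ∉ V n → φ x = 0) ∧ ∀ x, φ x ∈ Icc (0:ℝ) 1 := by
    intro n
    have hVopen : IsOpen (V n) := (hOo n).inter hCopen
    obtain ⟨ψ, hψc, hψ0, hψ1⟩ :=
      CompletelyRegularSpace.completely_regular (y n) (V n)ᶜ hVopen.isClosed_compl
        (fun hc => hc (hyV n))
    refine ⟨fun x => 1 - (ψ x : ℝ), continuous_const.sub (continuous_subtype_val.comp hψc),
      ?_, ?_, ?_⟩
    · simp [hψ0]
    · intro x hx
      have h1 : ψ x = 1 := hψ1 hx
      simp [h1]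
    · intro x
      have h2 := (ψ x).2
      rw [Set.mem_Icc] at h2
      simp only [Set.mem_Icc]
      constructor
      · linarith [h2.2]
      · linarith [h2.1]
  choose φ hφc hφ1 hφ0 hφ01 using keyφ
  set σ : X → ℝ := fun x => ∑ᶠ n : ℕ, (n : ℝ) * φ n x with hσ
  have hsupp : ∀ n : ℕ, Function.support (fun x => (n : ℝ) * φ n x) ⊆ V n := by
    intro n x hx
    by_contra hc
    exact hx (by simp [hφ0 n x hc])
  have hσc : Continuous σ :=
    continuous_finsum (fun n => continuous_const.mul (hφc n)) (hLF.subset hsupp)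
  have hσ0 : ∀ x, 0 ≤ σ x := fun x =>
    finsum_nonneg fun n => mul_nonneg (Nat.cast_nonneg n) (hφ01 n x).1
  have hσn : ∀ n : ℕ, (n : ℝ) ≤ σ (y n) := by
    intro n
    have hfin : (Function.support fun j : ℕ => (j : ℝ) * φ j (y n)).Finite :=
      (hLF.point_finite (y n)).subset (fun j hj => hsupp j hj)
    have := single_le_finsum n hfin (fun j => mul_nonneg (Nat.cast_nonneg j) (hφ01 j (y n)).1)
    rwa [hφ1 n, mul_one] at this
  -- the function v and its extension
  have hpos : ∀ x, (0:ℝ) < 1 + σ x := fun x => by linarith [hσ0 x]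
  set v : X → ↥unitInterval := fun x => ⟨(1 + σ x)⁻¹,
    Set.mem_Icc.mpr ⟨inv_nonneg.mpr (hpos x).le, by
      exact inv_le_one_of_one_le₀ (by linarith [hσ0 x])⟩⟩ with hv
  have hvc : Continuous v :=
    Continuous.subtype_mk ((continuous_const.add hσc).inv₀ fun x => (hpos x).ne') _
  set g0 : StoneCech X → ↥unitInterval := stoneCechExtend hvc with hg0
  set g : StoneCech X → ℝ := fun z => ((g0 z : ℝ)) with hg
  have hgc : Continuous g := continuous_subtype_val.comp (continuous_stoneCechExtend hvc)
  have hgi : ∀ x : X, g (stoneCechUnit x) = (1 + σ x)⁻¹ := by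
    intro x
    have hx := congrFun (stoneCechExtend_extends hvc) x
    simp only [Function.comp_apply] at hx
    rw [hg]
    simp only [hg0, hx, hv]
  -- the cluster point q
  set K : ℕ → Set (StoneCech X) := fun N => closure (stoneCechUnit '' (y '' Ici N)) with hKdef
  obtain ⟨q, hq⟩ := IsCompact.nonempty_iInter_of_sequence_nonempty_isCompact_isClosed K
    (fun N => closure_mono (image_mono (image_mono (Ici_subset_Ici.mpr (Nat.le_succ N)))))
    (fun N => ⟨stoneCechUnit (y N), subset_closure ⟨y N, ⟨N, mem_Ici.mpr le_rfl, rfl⟩, rfl⟩⟩)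
    isClosed_closure.isCompact (fun N => isClosed_closure)
  rw [mem_iInter] at hq
  have hgq : ∀ N : ℕ, g q ≤ (1 + (N:ℝ))⁻¹ := by
    intro N
    have hS : IsClosed {z : StoneCech X | g z ≤ (1 + (N:ℝ))⁻¹} :=
      isClosed_le hgc continuous_const
    refine closure_minimal ?_ hS (hq N)
    rintro _ ⟨x, ⟨m, hm, rfl⟩, rfl⟩
    rw [mem_setOf_eq, hgi]
    apply inv_anti₀ (by positivity)
    have := hσn m
    have hNm : (N : ℝ) ≤ m := by exact_mod_cast hm
    linarith
  have hgq0 : g q = 0 := by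
    have hge : 0 ≤ g q := (g0 q).2.1
    rcases eq_or_lt_of_le hge with heq | hlt
    · exact heq.symm
    · exfalso
      obtain ⟨N, hN⟩ := exists_nat_gt (g q)⁻¹
      have h1 := hgq N
      have h2 : (g q)⁻¹ < 1 + (N:ℝ) := by linarith
      have h3 : (1 + (N:ℝ))⁻¹ < g q := (inv_lt_comm₀ hlt (by positivity)).mp h2
      linarith
  -- q is in hewitt but g q = 0, contradiction
  have hqhew : q ∈ hewitt X := by
    apply hK
    refine closure_mono (image_mono ?_) (hq 0)
    rintro _ ⟨m, _, rfl⟩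
    exact hVC m (hyV m)
  have hZ : {z : StoneCech X | g z ≠ 0} ∈ {Z : Set (StoneCech X) |
      (∃ f : StoneCech X → ℝ, Continuous f ∧ Z = {x | f x ≠ 0}) ∧
        Set.range (stoneCechUnit : X → StoneCech X) ⊆ Z} := by
    refine ⟨⟨g, hgc, rfl⟩, ?_⟩
    rintro _ ⟨x, rfl⟩
    rw [mem_setOf_eq, hgi]
    exact ne_of_gt (inv_pos.mpr (hpos x))
  have := mem_sInter.mp hqhew _ hZ
  exact this hgq0


/-- for `P` pseudocompactness, `λ_P X = int_{βX} υX`. -/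
theorem stmt9 (X : Type) [TopologicalSpace X] [T35Space X] :
    (⋃₀ {V : Set (StoneCech X) |
        ∃ C : Set X, IsCoz C ∧ IsPseudocompactSpace ↥(closure C) ∧
          V = interior (closure (stoneCechUnit '' C))}) =
      interior (hewitt X) := by
  apply le_antisymm
  · apply sUnion_subset
    rintro V ⟨C, _, hps, rfl⟩
    exact interior_mono (closure_image_subset_hewitt hps)
  · intro p hp
    -- Urysohn function on the Stone–Čech compactification
    obtain ⟨f, hf0, hf1, hf01⟩ := exists_continuous_zero_one_of_isClosed
      (isClosed_singleton (x := p)) (isOpen_interior.isClosed_compl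
        (s := interior (hewitt X))) (by
          rw [Set.disjoint_left]
          rintro z rfl
          exact fun hz => hz hp)
    set C : Set X := {x | f (stoneCechUnit x) < 1 / 2} with hC
    have hCopen : IsOpen C :=
      isOpen_Iio.preimage (f.continuous.comp continuous_stoneCechUnit)
    have hfhalf : {z : StoneCech X | f z ≤ 1 / 2} ⊆ interior (hewitt X) := by
      intro z hz
      by_contra hz'
      have : f z = 1 := hf1 hz'
      rw [mem_setOf_eq, this] at hz
      norm_num at hz
    have hKsub : closure (stoneCechUnit '' C) ⊆ hewitt X := by
      have hcl : IsClosed {z : StoneCech X | f z ≤ 1 / 2} :=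
        isClosed_le f.continuous continuous_const
      have hsub : stoneCechUnit '' C ⊆ {z : StoneCech X | f z ≤ 1 / 2} := by
        rintro _ ⟨x, hx, rfl⟩
        exact le_of_lt (show f (stoneCechUnit x) < 1 / 2 from hx)
      exact subset_trans (closure_minimal hsub hcl) (subset_trans hfhalf interior_subset)
    refine mem_sUnion.mpr ⟨interior (closure (stoneCechUnit '' C)),
      ⟨C, ?_, ?_, rfl⟩, ?_⟩
    · -- C is a cozero set
      refine ⟨fun x => max (1 / 2 - f (stoneCechUnit x)) 0,
        (continuous_const.sub (f.continuous.comp continuous_stoneCechUnit)).max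
          continuous_const, ?_⟩
      ext x
      simp only [hC, mem_setOf_eq]
      constructor
      · intro hx
        exact ne_of_gt (lt_of_lt_of_le (by linarith) (le_max_left _ _))
      · intro hx
        by_contra hcon
        push_neg at hcon
        exact hx (max_eq_right (by linarith))
    · -- closure C is pseudocompact
      exact pseudo_of_closure_subset_hewitt hCopen hKsub
    · -- p is in the interior
      have hWopen : IsOpen (⇑f ⁻¹' Iio (1 / 2)) := isOpen_Iio.preimage f.continuous
      have hpW : p ∈ ⇑f ⁻¹' Iio (1 / 2) := by
        have : f p = 0 := hf0 rfl
        simp [this]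
      have hWsub : ⇑f ⁻¹' Iio (1 / 2) ⊆ closure (stoneCechUnit '' C) := by
        intro q hq
        rw [mem_closure_iff]
        intro o ho hqo
        obtain ⟨x, hx⟩ := denseRange_stoneCechUnit.exists_mem_open (ho.inter hWopen)
          ⟨q, hqo, hq⟩
        exact ⟨stoneCechUnit x, hx.1, ⟨x, hx.2, rfl⟩⟩
      exact interior_maximal hWsub hWopen hpW
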